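/- Let f : A → B be a ring homomorphism and M a B-module, regarded as an A-module via f. Then the augmented cosimplicial A-module M → M ⊗_A B → M ⊗_A B ⊗_A B → ⋯ (with coface maps inserting 1's) is chain homotopy equivalent to the constant complex M; in particular, the associated augmented cochain complex 0 → M → M ⊗_A B → M ⊗_A B^{⊗_A 2} → ⋯ is exact. -/

import Mathlib

open TensorProduct

universe u

variable (A B : Type u) [CommRing A] [CommRing B] [Algebra A B]

/-- `AmitsurPow A B n` is the `n`-fold tensor power `B ⊗[A] ⋯ ⊗[A] B`, with
`AmitsurPow A B 0 = A`. -/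
noncomputable def AmitsurPow (n : ℕ) : ModuleCat.{u} A :=
  Nat.rec (ModuleCat.of A A) (fun _ Tn => ModuleCat.of A (Tn ⊗[A] B)) n

/-- The `i`-th coface (unit-insertion) map `B^{⊗ n} → B^{⊗ (n+1)}`, inserting a `1`
into the `i`-th tensor slot. -/
noncomputable def amitsurIns :
    ∀ n : ℕ, Fin (n + 1) → ((AmitsurPow A B n) →ₗ[A] (AmitsurPow A B (n + 1)))
  | 0, _ => (TensorProduct.mk A (AmitsurPow A B 0) B).flip 1
  | n + 1, i =>
    Fin.lastCases
      ((TensorProduct.mk A (AmitsurPow A B (n + 1)) B).flip 1)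
      (fun j => TensorProduct.map (amitsurIns n j) (LinearMap.id (R := A) (M := B)))
      i

/-- The Amitsur differential `B^{⊗ n} → B^{⊗ (n+1)}`, the alternating sum of the
unit-insertion maps.  In degree `0` it is the structure map `A → B`. -/
noncomputable def amitsurD (n : ℕ) : (AmitsurPow A B n) →ₗ[A] (AmitsurPow A B (n + 1)) :=
  ∑ i : Fin (n + 1), ((-1 : ℤ) ^ (i : ℕ)) • amitsurIns A B n i

/-! ### Auxiliary constructions -/

/-- Identity map realizing the definitional equality
`AmitsurPow A B (n+1) = AmitsurPow A B n ⊗[A] B`. -/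
noncomputable def foldMap (n : ℕ) :
    ((AmitsurPow A B n) ⊗[A] B) →ₗ[A] (AmitsurPow A B (n + 1)) :=
  LinearMap.id

lemma foldMap_surjective (n : ℕ) : Function.Surjective (foldMap A B n) :=
  fun y => ⟨y, rfl⟩

/-- The `A`-bilinear action of `B` on a module `X` in a scalar tower. -/
noncomputable def actB (X : Type u) [AddCommGroup X] [Module A X] [Module B X]
    [IsScalarTower A B X] : B →ₗ[A] X →ₗ[A] X :=
  LinearMap.mk₂ A (fun b x => b • x) (fun b b' x => add_smul b b' x)
    (fun a b x => smul_assoc a b x) (fun b x y => smul_add b x y)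
    (fun a b x => (smul_comm a b x).symm)

variable (M : Type u) [AddCommGroup M] [Module B M] [Module A M] [IsScalarTower A B M]

/-- The contracting homotopy: multiply the outermost tensor factor into `M`. -/
noncomputable def hAux (N : Type u) [AddCommGroup N] [Module A N] :
    (M ⊗[A] (N ⊗[A] B)) →ₗ[A] (M ⊗[A] N) :=
  (TensorProduct.lift ((actB A B (M ⊗[A] N)).flip)).comp
    (TensorProduct.assoc A M N B).symm.toLinearMap

@[simp] lemma hAux_tmul (N : Type u) [AddCommGroup N] [Module A N] (m : M) (n : N) (b : B) :
    hAux A B M N (m ⊗ₜ (n ⊗ₜ b)) = (b • m) ⊗ₜ[A] n := by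
  simp [hAux, actB, TensorProduct.smul_tmul']

/-- The contracting homotopy in degree `n`. -/
noncomputable def HAux (n : ℕ) :
    (M ⊗[A] (AmitsurPow A B (n + 1))) →ₗ[A] (M ⊗[A] (AmitsurPow A B n)) :=
  hAux A B M (AmitsurPow A B n)

@[simp] lemma HAux_tmul (n : ℕ) (m : M) (t : AmitsurPow A B n) (b : B) :
    HAux A B M n (m ⊗ₜ (foldMap A B n (t ⊗ₜ b))) = (b • m) ⊗ₜ[A] t :=
  hAux_tmul A B M (AmitsurPow A B n) m t b

@[simp] lemma zsmul_tmul' {X Y : Type u} [AddCommGroup X] [Module A X] [AddCommGroup Y]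
    [Module A Y] (c : ℤ) (x : X) (y : Y) :
    (c • x) ⊗ₜ[A] y = c • (x ⊗ₜ[A] y) :=
  map_zsmul ((TensorProduct.mk A X Y).flip y) c x

@[simp] lemma tmul_zsmul' {X Y : Type u} [AddCommGroup X] [Module A X] [AddCommGroup Y]
    [Module A Y] (c : ℤ) (x : X) (y : Y) :
    x ⊗ₜ[A] (c • y) = c • (x ⊗ₜ[A] y) :=
  map_zsmul (TensorProduct.mk A X Y x) c y

/-! ### Structure of the differentials -/

lemma ins_last (n : ℕ) :
    amitsurIns A B n (Fin.last n) = (TensorProduct.mk A (AmitsurPow A B n) B).flip 1 := by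
  cases n with
  | zero => rfl
  | succ n => simp [amitsurIns]; exact Fin.lastCases_last ..

lemma ins_castSucc (n : ℕ) (j : Fin (n + 1)) :
    amitsurIns A B (n + 1) j.castSucc =
      TensorProduct.map (amitsurIns A B n j) (LinearMap.id (R := A) (M := B)) := by
  simp [amitsurIns]; exact Fin.lastCases_castSucc ..

lemma d_zero_apply (a : AmitsurPow A B 0) :
    amitsurD A B 0 a = foldMap A B 0 (a ⊗ₜ[A] (1 : B)) := by
  rw [amitsurD, Fin.sum_univ_one]
  simp only [Fin.val_zero, pow_zero, one_smul]
  rfl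

lemma d_succ_fold (n : ℕ) (t : AmitsurPow A B n) (b : B) :
    amitsurD A B (n + 1) (foldMap A B n (t ⊗ₜ[A] b)) =
      foldMap A B (n + 1) ((amitsurD A B n t) ⊗ₜ[A] b) +
        ((-1 : ℤ) ^ (n + 1)) •
          foldMap A B (n + 1) ((foldMap A B n (t ⊗ₜ[A] b)) ⊗ₜ[A] (1 : B)) := by
  rw [amitsurD, LinearMap.sum_apply, Fin.sum_univ_castSucc]
  congr 1
  · rw [amitsurD]
    have : foldMap A B (n + 1) ((∑ j : Fin (n + 1), ((-1 : ℤ) ^ (j : ℕ)) •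
        amitsurIns A B n j) t ⊗ₜ[A] b) =
        ∑ j : Fin (n + 1), foldMap A B (n + 1)
          (((((-1 : ℤ) ^ (j : ℕ)) • amitsurIns A B n j) t) ⊗ₜ[A] b) := by
      rw [LinearMap.sum_apply, TensorProduct.sum_tmul, map_sum]
    rw [this]
    refine Finset.sum_congr rfl fun j _ => ?_
    rw [ins_castSucc]
    simp only [LinearMap.smul_apply, Fin.coe_castSucc, zsmul_tmul', map_zsmul]
    rfl
  · rw [ins_last]
    simp only [LinearMap.smul_apply, Fin.val_last]
    rfl

/-! ### `d ∘ d = 0` -/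

lemma dd_zero (n : ℕ) : ∀ t : AmitsurPow A B n,
    amitsurD A B (n + 1) (amitsurD A B n t) = 0 := by
  induction n with
  | zero =>
    intro t
    have h1 : ((-1 : ℤ) ^ (0 + 1)) = -1 := by norm_num
    rw [d_zero_apply, d_succ_fold, d_zero_apply, h1]
    abel
  | succ n ih =>
    intro t
    obtain ⟨w, rfl⟩ := foldMap_surjective A B n t
    induction w using TensorProduct.induction_on with
    | zero => simp
    | add u v hu hv => rw [map_add, map_add, map_add, hu, hv, add_zero]
    | tmul u b =>
      have h2 : ((-1 : ℤ) ^ (n + 2)) = -((-1 : ℤ) ^ (n + 1)) := by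
        rw [pow_succ]; ring
      rw [d_succ_fold, map_add, map_zsmul, d_succ_fold, d_succ_fold, ih u,
        TensorProduct.zero_tmul, map_zero, zero_add, d_succ_fold,
        TensorProduct.add_tmul, zsmul_tmul', map_add, map_zsmul, h2]
      module

lemma dd (n : ℕ) : (amitsurD A B (n + 1)).comp (amitsurD A B n) = 0 :=
  LinearMap.ext fun t => dd_zero A B n t

/-! ### Main theorem -/

/-- For a ring map `A → B` and a `B`-module `M` (regarded as an `A`-module), the augmented
cosimplicial complex `0 → M → M ⊗[A] B → M ⊗[A] B^{⊗ 2} → ⋯` (with differentials obtained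
from the Amitsur differentials by tensoring with `M`) is chain-null-homotopic, via a
contracting homotopy coming from the `B`-action on `M`; in particular it is exact.
(Here the degree-`n` term is `M ⊗[A] B^{⊗ n}`, with `M ⊗[A] B^{⊗ 0} = M ⊗[A] A ≅ M`.) -/
theorem amitsur_complex_with_coefficients_null_homotopic
    (M : Type u) [AddCommGroup M] [Module B M] [Module A M] [IsScalarTower A B M] :
    (∃ s : ∀ n : ℕ,
        (M ⊗[A] (AmitsurPow A B (n + 1))) →ₗ[A] (M ⊗[A] (AmitsurPow A B n)),
      (s 0).comp (LinearMap.lTensor M (amitsurD A B 0)) = LinearMap.id ∧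
      ∀ n : ℕ, (LinearMap.lTensor M (amitsurD A B n)).comp (s n) +
        (s (n + 1)).comp (LinearMap.lTensor M (amitsurD A B (n + 1))) = LinearMap.id) ∧
    Function.Injective (LinearMap.lTensor M (amitsurD A B 0)) ∧
    ∀ n : ℕ, LinearMap.ker (LinearMap.lTensor M (amitsurD A B (n + 1))) =
      LinearMap.range (LinearMap.lTensor M (amitsurD A B n)) := by
  have cond1 : (((-1 : ℤ) ^ 0) • HAux A B M 0).comp
      (LinearMap.lTensor M (amitsurD A B 0)) = LinearMap.id := by
    apply TensorProduct.ext'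
    intro m a
    simp only [pow_zero, one_smul, LinearMap.comp_apply, LinearMap.lTensor_tmul,
      d_zero_apply, HAux_tmul, LinearMap.id_apply]
  have cond2 : ∀ n : ℕ,
      (LinearMap.lTensor M (amitsurD A B n)).comp (((-1 : ℤ) ^ n) • HAux A B M n) +
        (((-1 : ℤ) ^ (n + 1)) • HAux A B M (n + 1)).comp
          (LinearMap.lTensor M (amitsurD A B (n + 1))) = LinearMap.id := by
    intro n
    apply LinearMap.ext
    intro z
    obtain ⟨w, rfl⟩ := LinearMap.lTensor_surjective M (foldMap_surjective A B n) z
    induction w using TensorProduct.induction_on with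
    | zero => simp
    | add u v hu hv => rw [map_add, map_add, map_add, hu, hv]
    | tmul m t =>
      induction t using TensorProduct.induction_on with
      | zero => simp
      | add u v hu hv =>
        rw [TensorProduct.tmul_add, map_add, map_add, map_add, hu, hv]
      | tmul x b =>
        simp only [LinearMap.add_apply, LinearMap.comp_apply, LinearMap.lTensor_tmul,
          LinearMap.smul_apply, d_succ_fold, TensorProduct.tmul_add, tmul_zsmul',
          map_add, map_zsmul, HAux_tmul, LinearMap.id_apply, one_smul]
        have e1 : ((-1 : ℤ) ^ (n + 1)) • ((-1 : ℤ) ^ (n + 1)) •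
            (m ⊗ₜ[A] (foldMap A B n) (x ⊗ₜ[A] b)) =
            m ⊗ₜ[A] (foldMap A B n) (x ⊗ₜ[A] b) := by
          rw [smul_smul, ← pow_add, Even.neg_one_pow ⟨n + 1, rfl⟩, one_smul]
        rw [e1, pow_succ]
        module
  refine ⟨⟨fun n => ((-1 : ℤ) ^ n) • HAux A B M n, cond1, cond2⟩, ?_, ?_⟩
  · intro x y h
    have hx := LinearMap.congr_fun cond1 x
    have hy := LinearMap.congr_fun cond1 y
    simp only [LinearMap.comp_apply, LinearMap.id_apply] at hx hy
    rw [← hx, ← hy, h]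
  · intro n
    ext x
    simp only [LinearMap.mem_ker, LinearMap.mem_range]
    constructor
    · intro hx
      have h2 := LinearMap.congr_fun (cond2 n) x
      simp only [LinearMap.add_apply, LinearMap.comp_apply, LinearMap.id_apply, hx,
        map_zero, add_zero] at h2
      exact ⟨_, h2⟩
    · rintro ⟨y, rfl⟩
      have h0 : (LinearMap.lTensor M (amitsurD A B (n + 1))).comp
          (LinearMap.lTensor M (amitsurD A B n)) = 0 := by
        rw [← LinearMap.lTensor_comp, dd, LinearMap.lTensor_zero]
      have := LinearMap.congr_fun h0 y
      simpa using this
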